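/- arXiv:0711.0552 — 2 statements merged into one kernel-verified Lean document; each statement's English description precedes it below -/
import Mathlib

section
/- In the shifted Yangian Y_π(gl_n), for each index i the generating series satisfy [a_i(u), c_j(v)] = 0 and [b_i(u), c_j(v)] = 0 whenever i ≠ j, where a_i(u) = d_1(u)d_2(u-1)⋯d_i(u-i+1), b_i(u) = a_i(u)e_i(u-i+1), and c_i(u) = f_i(u-i+1)a_i(u). -/
open scoped Classical
open PowerSeries

noncomputable section

/-- The shifted Yangian `Y_π(gl_n)` presentation: a ring `A` together with elements
`d i r`, `d' i r`, `e i r`, `f i r` satisfying the Brundan–Kleshchev defining relations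
for the pyramid `π = (p 1 ≤ ⋯ ≤ p n)`.  (`d i 0 = 1`, `e i r = 0` below the admissible
range, `f i 0 = 0`.) -/
structure ShiftedYangian (A : Type) [Ring A] (n : ℕ) (p : ℕ → ℕ) where
  d : ℕ → ℕ → A
  d' : ℕ → ℕ → A
  e : ℕ → ℕ → A
  f : ℕ → ℕ → A
  d_zero : ∀ i, d i 0 = 1
  d'_zero : ∀ i, d' i 0 = 1
  e_zero : ∀ i r, r < p (i+1) - p i + 1 → e i r = 0
  f_zero : ∀ i, f i 0 = 0
  d_inv : ∀ i r, 1 ≤ i → i ≤ n →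
    (∑ t ∈ Finset.range (r+1), d i t * d' i (r - t)) = if r = 0 then 1 else 0
  rel_dd : ∀ i j r s, ⁅d i r, d j s⁆ = 0
  rel_ef : ∀ i j r s, 1 ≤ i → i ≤ n - 1 → 1 ≤ j → j ≤ n - 1 →
    p (i+1) - p i + 1 ≤ r → 1 ≤ s →
    ⁅e i r, f j s⁆ =
      if i = j then -(∑ t ∈ Finset.range (r+s), d' i t * d (i+1) (r+s-1-t)) else 0
  rel_de : ∀ i j r s, 1 ≤ i → i ≤ n → 1 ≤ j → j ≤ n - 1 → 1 ≤ r →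
    p (j+1) - p j + 1 ≤ s →
    ⁅d i r, e j s⁆ =
      ((if i = j then (1:ℤ) else 0) - (if i = j + 1 then 1 else 0)) •
        ∑ t ∈ Finset.range r, d i t * e j (r+s-1-t)
  rel_df : ∀ i j r s, 1 ≤ i → i ≤ n → 1 ≤ j → j ≤ n - 1 → 1 ≤ r → 1 ≤ s →
    ⁅d i r, f j s⁆ =
      ((if i = j + 1 then (1:ℤ) else 0) - (if i = j then 1 else 0)) •
        ∑ t ∈ Finset.range r, f j (r+s-1-t) * d i t
  rel_ee : ∀ i r s, 1 ≤ i → i ≤ n - 1 →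
    p (i+1) - p i + 1 ≤ r → p (i+1) - p i + 1 ≤ s →
    ⁅e i r, e i (s+1)⁆ - ⁅e i (r+1), e i s⁆ = e i r * e i s + e i s * e i r
  rel_ff : ∀ i r s, 1 ≤ i → i ≤ n - 1 → 1 ≤ r → 1 ≤ s →
    ⁅f i (r+1), f i s⁆ - ⁅f i r, f i (s+1)⁆ = f i r * f i s + f i s * f i r
  rel_ee1 : ∀ i r s, 1 ≤ i → i + 1 ≤ n - 1 →
    p (i+1) - p i + 1 ≤ r → p (i+2) - p (i+1) + 1 ≤ s →
    ⁅e i r, e (i+1) (s+1)⁆ - ⁅e i (r+1), e (i+1) s⁆ = -(e i r * e (i+1) s)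
  rel_ff1 : ∀ i r s, 1 ≤ i → i + 1 ≤ n - 1 → 1 ≤ r → 1 ≤ s →
    ⁅f i (r+1), f (i+1) s⁆ - ⁅f i r, f (i+1) (s+1)⁆ = -(f (i+1) s * f i r)
  rel_ee2 : ∀ i j r s, 1 ≤ i → i ≤ n - 1 → 1 ≤ j → j ≤ n - 1 →
    (i + 1 < j ∨ j + 1 < i) →
    p (i+1) - p i + 1 ≤ r → p (j+1) - p j + 1 ≤ s → ⁅e i r, e j s⁆ = 0
  rel_ff2 : ∀ i j r s, 1 ≤ i → i ≤ n - 1 → 1 ≤ j → j ≤ n - 1 →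
    (i + 1 < j ∨ j + 1 < i) → 1 ≤ r → 1 ≤ s → ⁅f i r, f j s⁆ = 0
  serre_e : ∀ i j r s t, 1 ≤ i → i ≤ n - 1 → 1 ≤ j → j ≤ n - 1 →
    (i = j + 1 ∨ j = i + 1) →
    p (i+1) - p i + 1 ≤ r → p (i+1) - p i + 1 ≤ s → p (j+1) - p j + 1 ≤ t →
    ⁅e i r, ⁅e i s, e j t⁆⁆ + ⁅e i s, ⁅e i r, e j t⁆⁆ = 0
  serre_f : ∀ i j r s t, 1 ≤ i → i ≤ n - 1 → 1 ≤ j → j ≤ n - 1 →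
    (i = j + 1 ∨ j = i + 1) → 1 ≤ r → 1 ≤ s → 1 ≤ t →
    ⁅f i r, ⁅f i s, f j t⁆⁆ + ⁅f i s, ⁅f i r, f j t⁆⁆ = 0

variable {A : Type} [Ring A]

/-- The re-expansion of `g(u - c)` as a formal series in `u⁻¹`, where `g` is regarded as a
series in `u⁻¹` (the coefficient of `u⁻ʲ` in `(u-c)⁻ʳ` is `C(j-1, r-1) cʲ⁻ʳ`). -/
def shiftSeries (c : ℤ) (g : PowerSeries A) : PowerSeries A :=
  PowerSeries.mk fun j => if j = 0 then PowerSeries.coeff (R := A) 0 g else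
    ∑ r ∈ Finset.Icc 1 j,
      ((j-1).choose (r-1) : A) * (c : A)^(j-r) * PowerSeries.coeff (R := A) r g

/-- Coefficient function indexed by `ℤ` (zero in negative degrees). -/
def zcoeff (j : ℤ) (g : PowerSeries A) : A :=
  if h : 0 ≤ j then PowerSeries.coeff (R := A) j.toNat g else 0

namespace ShiftedYangian

variable {n : ℕ} {p : ℕ → ℕ} (Y : ShiftedYangian A n p)

/-- The series `d_i(u) = 1 + Σ_{r≥1} d_i^{(r)} u⁻ʳ` (as a series in `u⁻¹`). -/
def dS (i : ℕ) : PowerSeries A := PowerSeries.mk (Y.d i)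

/-- The series `e_i(u)`. -/
def eS (i : ℕ) : PowerSeries A := PowerSeries.mk (Y.e i)

/-- The series `f_i(u)`. -/
def fS (i : ℕ) : PowerSeries A := PowerSeries.mk (Y.f i)

/-- `a_i(u) = d_1(u) d_2(u-1) ⋯ d_i(u-i+1)`. -/
def aS (i : ℕ) : PowerSeries A :=
  ((List.range i).map fun k : ℕ => shiftSeries (k : ℤ) (Y.dS (k+1))).prod

/-- `b_i(u) = a_i(u) e_i(u-i+1)`. -/
def bS (i : ℕ) : PowerSeries A := Y.aS i * shiftSeries ((i : ℤ) - 1) (Y.eS i)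

/-- `c_i(u) = f_i(u-i+1) a_i(u)`. -/
def cS (i : ℕ) : PowerSeries A := shiftSeries ((i : ℤ) - 1) (Y.fS i) * Y.aS i

end ShiftedYangian

/-- `p_1 + ⋯ + p_i`, the degree of the polynomial `A_i(u)`. -/
def degP (p : ℕ → ℕ) (i : ℕ) : ℕ := ∑ k ∈ Finset.range i, p (k+1)

/-- The series `u^{-(p_1+⋯+p_i)} · u^{p_1}(u-1)^{p_2}⋯(u-i+1)^{p_i}`, i.e.
`∏_{k=0}^{i-1} (1 - k u⁻¹)^{p_{k+1}}` as a series in `u⁻¹`. -/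
def polyPre (p : ℕ → ℕ) (i : ℕ) : PowerSeries A :=
  ((List.range i).map fun k : ℕ =>
    ((1 : PowerSeries A) - PowerSeries.C (R := A) (k : A) * PowerSeries.X) ^ (p (k+1))).prod

/-- `∏_{k=0}^{i-1} (1 - (k+1) u⁻¹)^{p_{k+1}}`, the prefactor of `A_i(u-1)` divided by
`u^{p_1+⋯+p_i}`. -/
def polyPreSh (p : ℕ → ℕ) (i : ℕ) : PowerSeries A :=
  ((List.range i).map fun k : ℕ =>
    ((1 : PowerSeries A) - PowerSeries.C (R := A) ((k : A) + 1) * PowerSeries.X) ^ (p (k+1))).prod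

/-- The prefactor of `B_i(u)` divided by `u^{p_1+⋯+p_{i-1}+p_{i+1}}`:
`∏_{k=0}^{i-2} (1 - k u⁻¹)^{p_{k+1}} · (1 - (i-1) u⁻¹)^{p_{i+1}}`. -/
def polyPreB (p : ℕ → ℕ) (i : ℕ) : PowerSeries A :=
  (((List.range (i-1)).map fun k : ℕ =>
    ((1 : PowerSeries A) - PowerSeries.C (R := A) (k : A) * PowerSeries.X) ^ (p (k+1))).prod) *
    ((1 : PowerSeries A) - PowerSeries.C (R := A) ((i : A) - 1) * PowerSeries.X) ^ (p (i+1))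

namespace ShiftedYangian

variable {n : ℕ} {p : ℕ → ℕ} (Y : ShiftedYangian A n p)

/-- `u^{-(p_1+⋯+p_i)} A_i(u)`. -/
def alS (i : ℕ) : PowerSeries A := polyPre p i * Y.aS i

/-- `u^{-(p_1+⋯+p_{i-1}+p_{i+1})} B_i(u)`. -/
def beS (i : ℕ) : PowerSeries A := polyPreB p i * Y.bS i

/-- `u^{-(p_1+⋯+p_i)} C_i(u)`. -/
def gaS (i : ℕ) : PowerSeries A := polyPre p i * Y.cS i

end ShiftedYangian


/-! ### Auxiliary lemmas -/

section Aux

variable {A : Type} [Ring A]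

lemma lie_sum_left {s : Finset ℕ} (f : ℕ → A) (z : A) :
    ⁅∑ i ∈ s, f i, z⁆ = ∑ i ∈ s, ⁅f i, z⁆ := by
  simp only [Ring.lie_def, Finset.sum_mul, Finset.mul_sum, ← Finset.sum_sub_distrib]

lemma lie_nsmul_left (n : ℕ) (x y : A) : ⁅n • x, y⁆ = n • ⁅x, y⁆ := by
  simp only [Ring.lie_def, smul_sub, smul_mul_assoc, mul_smul_comm]

lemma lie_one_left (x : A) : ⁅(1:A), x⁆ = 0 := by simp [Ring.lie_def]

lemma lie_intCast_mul_left (q : ℤ) (x y : A) : ⁅(q:A) * x, y⁆ = (q:A) * ⁅x, y⁆ := by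
  simp only [Ring.lie_def, mul_sub, mul_assoc]
  rw [← mul_assoc y, ← (Int.cast_commute q y).eq, mul_assoc]

lemma lie_mul_left (x y z : A) : ⁅x * y, z⁆ = x * ⁅y, z⁆ + ⁅x, z⁆ * y := by
  simp only [Ring.lie_def]; noncomm_ring

lemma coeff_shiftSeries_zero (c : ℤ) (g : PowerSeries A) :
    (PowerSeries.coeff (R := A) 0) (shiftSeries c g) = PowerSeries.coeff (R := A) 0 g := by
  simp [shiftSeries]

lemma coeff_shiftSeries_succ (c : ℤ) (g : PowerSeries A) (m : ℕ) :
    (PowerSeries.coeff (R := A) (m+1)) (shiftSeries c g) =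
      ∑ t ∈ Finset.range (m+1), (m.choose t) • ((c:A)^(m-t) * (PowerSeries.coeff (R := A) (t+1)) g) := by
  rw [shiftSeries, PowerSeries.coeff_mk, if_neg (Nat.succ_ne_zero m)]
  rw [show Finset.Icc 1 (m+1) = (Finset.range (m+1)).map ⟨(·+1), add_left_injective 1⟩ by
    ext x
    simp only [Finset.mem_Icc, Finset.mem_map, Finset.mem_range, Function.Embedding.coeFn_mk]
    constructor
    · rintro ⟨h1, h2⟩; exact ⟨x-1, by omega, by omega⟩
    · rintro ⟨a, ha, rfl⟩; omega]
  rw [Finset.sum_map]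
  refine Finset.sum_congr rfl fun t ht => ?_
  simp [nsmul_eq_mul, mul_assoc, Nat.add_sub_add_right]

/-- Pascal-type splitting of a binomially weighted sum. -/
lemma pascal_sum {M : Type} [AddCommMonoid M] (x : ℕ → M) (m : ℕ) :
    ∑ t ∈ Finset.range (m+2), ((m+1).choose t) • x t =
      ∑ t ∈ Finset.range (m+1), (m.choose t) • x t
        + ∑ t ∈ Finset.range (m+1), (m.choose t) • x (t+1) := by
  have h0 : ∀ t, ((m+1).choose (t+1)) • x (t+1)
      = (m.choose t) • x (t+1) + (m.choose (t+1)) • x (t+1) := fun t => by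
    rw [Nat.choose_succ_succ, add_smul]
  rw [Finset.sum_range_succ' (fun t => ((m+1).choose t) • x t) (m+1)]
  simp only [h0, Finset.sum_add_distrib, Nat.choose_zero_right, one_smul]
  rw [show ∑ t ∈ Finset.range (m+1), (m.choose (t+1)) • x (t+1)
      = ∑ t ∈ Finset.range m, (m.choose (t+1)) • x (t+1) from by
    rw [Finset.sum_range_succ, Nat.choose_succ_self, zero_smul, add_zero]]
  rw [show ∑ t ∈ Finset.range (m+1), (m.choose t) • x t
      = ∑ t ∈ Finset.range m, (m.choose (t+1)) • x (t+1) + x 0 from by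
    rw [Finset.sum_range_succ' (fun t => (m.choose t) • x t) m]; simp]
  abel


lemma lie_coeff_shift (z : ℕ → A) (c : ℤ) (N : ℕ) (w : A) :
    ⁅PowerSeries.coeff (R := A) (N+1) (shiftSeries c (PowerSeries.mk z)), w⁆
      = ∑ t ∈ Finset.range (N+1), (N.choose t) • ((c:A)^(N-t) * ⁅z (t+1), w⁆) := by
  rw [coeff_shiftSeries_succ, lie_sum_left]
  refine Finset.sum_congr rfl fun t ht => ?_
  rw [lie_nsmul_left, PowerSeries.coeff_mk, ← Int.cast_pow, lie_intCast_mul_left, Int.cast_pow]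

/-- The master "shifted step relation": if the generators `z a` satisfy the step relation
`⁅z (a+1), g s⁆ = ⁅z a, g (s+1)⁆ + ext a s` for `s ≥ s₀`, then the coefficients of the
shifted series satisfy an analogous relation. -/
lemma core_step (z g : ℕ → A) (ext : ℕ → ℕ → A) (c : ℤ) (s₀ : ℕ) (h0 : z 0 = 1)
    (hstep : ∀ a s, s₀ ≤ s → ⁅z (a+1), g s⁆ = ⁅z a, g (s+1)⁆ + ext a s) :
    ∀ m s, s₀ ≤ s →
      ⁅PowerSeries.coeff (R := A) (m+1) (shiftSeries c (PowerSeries.mk z)), g s⁆ =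
        (c:A) * ⁅PowerSeries.coeff (R := A) m (shiftSeries c (PowerSeries.mk z)), g s⁆
        + ⁅PowerSeries.coeff (R := A) m (shiftSeries c (PowerSeries.mk z)), g (s+1)⁆
        + PowerSeries.coeff (R := A) m (shiftSeries c (PowerSeries.mk (fun a => ext a s))) := by
  intro m s hs
  cases m with
  | zero =>
      rw [lie_coeff_shift, coeff_shiftSeries_zero, coeff_shiftSeries_zero,
        PowerSeries.coeff_mk, PowerSeries.coeff_mk, h0, lie_one_left, lie_one_left]
      simp [hstep 0 s hs, h0, lie_one_left]
  | succ k =>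
      rw [lie_coeff_shift z c (k+1) (g s),
        pascal_sum (fun t => (c:A)^(k+1-t) * ⁅z (t+1), g s⁆) k]
      have e1 : ∑ t ∈ Finset.range (k+1), (k.choose t) • ((c:A)^(k+1-t) * ⁅z (t+1), g s⁆)
          = (c:A) * ⁅PowerSeries.coeff (R := A) (k+1) (shiftSeries c (PowerSeries.mk z)), g s⁆ := by
        rw [lie_coeff_shift, Finset.mul_sum]
        refine Finset.sum_congr rfl fun t ht => ?_
        rw [show k+1-t = (k-t)+1 from by
          simp only [Finset.mem_range] at ht; omega]
        rw [pow_succ', mul_assoc, mul_smul_comm]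
      have e2 : ∑ t ∈ Finset.range (k+1), (k.choose t) • ((c:A)^(k+1-(t+1)) * ⁅z (t+1+1), g s⁆)
          = ⁅PowerSeries.coeff (R := A) (k+1) (shiftSeries c (PowerSeries.mk z)), g (s+1)⁆
            + PowerSeries.coeff (R := A) (k+1) (shiftSeries c (PowerSeries.mk (fun a => ext a s))) := by
        rw [lie_coeff_shift, coeff_shiftSeries_succ, ← Finset.sum_add_distrib]
        refine Finset.sum_congr rfl fun t ht => ?_
        rw [Nat.add_sub_add_right, hstep (t+1) s hs, PowerSeries.coeff_mk, mul_add, smul_add]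
      rw [e1, e2, add_assoc]

end Aux

section Aux2

variable {A : Type} [Ring A]

lemma coeff_shift_mk_mul_left (c : ℤ) (w : A) (z : ℕ → A) (m : ℕ) :
    PowerSeries.coeff (R := A) m (shiftSeries c (PowerSeries.mk fun a => w * z a))
      = w * PowerSeries.coeff (R := A) m (shiftSeries c (PowerSeries.mk z)) := by
  cases m with
  | zero => simp [coeff_shiftSeries_zero]
  | succ k =>
      rw [coeff_shiftSeries_succ, coeff_shiftSeries_succ, Finset.mul_sum]
      refine Finset.sum_congr rfl fun t ht => ?_
      rw [PowerSeries.coeff_mk, PowerSeries.coeff_mk, mul_smul_comm, ← mul_assoc,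
        ← Int.cast_pow, (Int.cast_commute (c^(k-t)) w).eq, Int.cast_pow, mul_assoc]

lemma coeff_shift_mk_mul_right (c : ℤ) (w : A) (z : ℕ → A) (m : ℕ) :
    PowerSeries.coeff (R := A) m (shiftSeries c (PowerSeries.mk fun a => z a * w))
      = PowerSeries.coeff (R := A) m (shiftSeries c (PowerSeries.mk z)) * w := by
  cases m with
  | zero => simp [coeff_shiftSeries_zero]
  | succ k =>
      rw [coeff_shiftSeries_succ, coeff_shiftSeries_succ, Finset.sum_mul]
      refine Finset.sum_congr rfl fun t ht => ?_
      rw [PowerSeries.coeff_mk, PowerSeries.coeff_mk, smul_mul_assoc, mul_assoc]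

lemma coeff_shift_mk_neg (c : ℤ) (z : ℕ → A) (m : ℕ) :
    PowerSeries.coeff (R := A) m (shiftSeries c (PowerSeries.mk fun a => -(z a)))
      = -(PowerSeries.coeff (R := A) m (shiftSeries c (PowerSeries.mk z))) := by
  cases m with
  | zero => simp [coeff_shiftSeries_zero]
  | succ k =>
      rw [coeff_shiftSeries_succ, coeff_shiftSeries_succ, ← Finset.sum_neg_distrib]
      refine Finset.sum_congr rfl fun t ht => ?_
      simp [mul_neg]

namespace ShiftedYangian

variable {n : ℕ} {p : ℕ → ℕ} (Y : ShiftedYangian A n p)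

lemma step_df_self {j : ℕ} (hj1 : 1 ≤ j) (hj2 : j ≤ n - 1) :
    ∀ a s, 1 ≤ s →
      ⁅Y.d j (a+1), Y.f j s⁆ = ⁅Y.d j a, Y.f j (s+1)⁆ + (-(Y.f j s * Y.d j a)) := by
  have hjn : j ≤ n := by omega
  have hc : ((if j = j + 1 then (1:ℤ) else 0) - (if j = j then 1 else 0)) = -1 := by
    rw [if_neg (by omega), if_pos rfl]; norm_num
  intro a s hs
  cases a with
  | zero =>
      rw [Y.rel_df j j 1 s hj1 hjn hj1 hj2 le_rfl hs, Y.d_zero, lie_one_left, hc]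
      simp [Y.d_zero]
  | succ b =>
      rw [Y.rel_df j j (b+2) s hj1 hjn hj1 hj2 (by omega) hs,
          Y.rel_df j j (b+1) (s+1) hj1 hjn hj1 hj2 (by omega) (by omega), hc,
          neg_smul, one_smul, neg_smul, one_smul]
      have hsum : ∑ t ∈ Finset.range (b+2), Y.f j (b+2+s-1-t) * Y.d j t
          = ∑ t ∈ Finset.range (b+1), Y.f j (b+1+(s+1)-1-t) * Y.d j t
            + Y.f j s * Y.d j (b+1) := by
        rw [Finset.sum_range_succ]
        congr 1
        · exact Finset.sum_congr rfl fun t ht => by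
            rw [show b+2+s-1-t = b+1+(s+1)-1-t from by omega]
        · rw [show b+2+s-1-(b+1) = s from by omega]
      rw [hsum, neg_add]

lemma step_df_succ {j : ℕ} (hj1 : 1 ≤ j) (hj2 : j ≤ n - 1) :
    ∀ a s, 1 ≤ s →
      ⁅Y.d (j+1) (a+1), Y.f j s⁆ = ⁅Y.d (j+1) a, Y.f j (s+1)⁆ + Y.f j s * Y.d (j+1) a := by
  have hjn : j + 1 ≤ n := by omega
  have hc : ((if j + 1 = j + 1 then (1:ℤ) else 0) - (if j + 1 = j then 1 else 0)) = 1 := by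
    rw [if_pos rfl, if_neg (by omega)]; norm_num
  intro a s hs
  cases a with
  | zero =>
      rw [Y.rel_df (j+1) j 1 s (by omega) hjn hj1 hj2 le_rfl hs, Y.d_zero, lie_one_left, hc]
      simp [Y.d_zero]
  | succ b =>
      rw [Y.rel_df (j+1) j (b+2) s (by omega) hjn hj1 hj2 (by omega) hs,
          Y.rel_df (j+1) j (b+1) (s+1) (by omega) hjn hj1 hj2 (by omega) (by omega), hc,
          one_smul, one_smul]
      rw [Finset.sum_range_succ]
      congr 1
      · exact Finset.sum_congr rfl fun t ht => by
          rw [show b+2+s-1-t = b+1+(s+1)-1-t from by omega]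
      · rw [show b+2+s-1-(b+1) = s from by omega]

lemma step_de_self {j : ℕ} (hj1 : 1 ≤ j) (hj2 : j ≤ n - 1) :
    ∀ a s, p (j+1) - p j + 1 ≤ s →
      ⁅Y.d j (a+1), Y.e j s⁆ = ⁅Y.d j a, Y.e j (s+1)⁆ + Y.d j a * Y.e j s := by
  have hjn : j ≤ n := by omega
  have hc : ((if j = j then (1:ℤ) else 0) - (if j = j + 1 then 1 else 0)) = 1 := by
    rw [if_pos rfl, if_neg (by omega)]; norm_num
  intro a s hs
  cases a with
  | zero =>
      rw [Y.rel_de j j 1 s hj1 hjn hj1 hj2 le_rfl hs, Y.d_zero, lie_one_left, hc]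
      simp [Y.d_zero]
  | succ b =>
      rw [Y.rel_de j j (b+2) s hj1 hjn hj1 hj2 (by omega) hs,
          Y.rel_de j j (b+1) (s+1) hj1 hjn hj1 hj2 (by omega) (by omega), hc,
          one_smul, one_smul]
      rw [Finset.sum_range_succ]
      congr 1
      · exact Finset.sum_congr rfl fun t ht => by
          rw [show b+2+s-1-t = b+1+(s+1)-1-t from by omega]
      · rw [show b+2+s-1-(b+1) = s from by omega]

lemma step_de_succ {j : ℕ} (hj1 : 1 ≤ j) (hj2 : j ≤ n - 1) :
    ∀ a s, p (j+1) - p j + 1 ≤ s →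
      ⁅Y.d (j+1) (a+1), Y.e j s⁆
        = ⁅Y.d (j+1) a, Y.e j (s+1)⁆ + (-(Y.d (j+1) a * Y.e j s)) := by
  have hjn : j + 1 ≤ n := by omega
  have hc : ((if j + 1 = j then (1:ℤ) else 0) - (if j + 1 = j + 1 then 1 else 0)) = -1 := by
    rw [if_neg (by omega), if_pos rfl]; norm_num
  intro a s hs
  cases a with
  | zero =>
      rw [Y.rel_de (j+1) j 1 s (by omega) hjn hj1 hj2 le_rfl hs, Y.d_zero, lie_one_left, hc]
      simp [Y.d_zero]
  | succ b =>
      rw [Y.rel_de (j+1) j (b+2) s (by omega) hjn hj1 hj2 (by omega) hs,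
          Y.rel_de (j+1) j (b+1) (s+1) (by omega) hjn hj1 hj2 (by omega) (by omega), hc,
          neg_smul, one_smul, neg_smul, one_smul]
      have hsum : ∑ t ∈ Finset.range (b+2), Y.d (j+1) t * Y.e j (b+2+s-1-t)
          = ∑ t ∈ Finset.range (b+1), Y.d (j+1) t * Y.e j (b+1+(s+1)-1-t)
            + Y.d (j+1) (b+1) * Y.e j s := by
        rw [Finset.sum_range_succ]
        congr 1
        · exact Finset.sum_congr rfl fun t ht => by
            rw [show b+2+s-1-t = b+1+(s+1)-1-t from by omega]
        · rw [show b+2+s-1-(b+1) = s from by omega]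
      rw [hsum, neg_add]

end ShiftedYangian

end Aux2

section Aux3

variable {A : Type} [Ring A]

lemma keystep_f (C Xa Zb F F1 : A) (hC : C * Xa = Xa * C) :
    Xa * ((C+1) * ⁅Zb, F⁆ + ⁅Zb, F1⁆ + F * Zb)
      + (C * ⁅Xa, F⁆ + ⁅Xa, F1⁆ + -(F * Xa)) * Zb
    = (C+1) * (Xa * ⁅Zb, F⁆ + ⁅Xa, F⁆ * Zb)
      + (Xa * ⁅Zb, F1⁆ + ⁅Xa, F1⁆ * Zb) := by
  have e : ∀ W : A, Xa * ((C+1) * W) = (C+1) * (Xa * W) := fun W => by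
    rw [← mul_assoc, ← mul_assoc]
    congr 1
    rw [mul_add, add_mul, hC, mul_one, one_mul]
  rw [mul_add, mul_add, e]
  simp only [Ring.lie_def]
  noncomm_ring

lemma keystep_e (C Xa Zb E E1 : A) (hC : C * Xa = Xa * C) :
    Xa * ((C+1) * ⁅Zb, E⁆ + ⁅Zb, E1⁆ + -(Zb * E))
      + (C * ⁅Xa, E⁆ + ⁅Xa, E1⁆ + Xa * E) * Zb
    = C * (Xa * ⁅Zb, E⁆ + ⁅Xa, E⁆ * Zb)
      + (Xa * ⁅Zb, E1⁆ + ⁅Xa, E1⁆ * Zb) := by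
  have e : ∀ W : A, Xa * ((C+1) * W) = (C+1) * (Xa * W) := fun W => by
    rw [← mul_assoc, ← mul_assoc]
    congr 1
    rw [mul_add, add_mul, hC, mul_one, one_mul]
  rw [mul_add, mul_add, e]
  simp only [Ring.lie_def]
  noncomm_ring

/-- Abstract form of the quantum-determinant commutation (the `f`-side):
the coefficients of `x(u - c) · y(u - c - 1)` commute with all `g s`, `s ≥ s₀`. -/
lemma key_abstract_f (x y g : ℕ → A) (c : ℤ) (s₀ : ℕ)
    (hx0 : x 0 = 1) (hy0 : y 0 = 1)
    (hxstep : ∀ a s, s₀ ≤ s → ⁅x (a+1), g s⁆ = ⁅x a, g (s+1)⁆ + -(g s * x a))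
    (hystep : ∀ a s, s₀ ≤ s → ⁅y (a+1), g s⁆ = ⁅y a, g (s+1)⁆ + g s * y a) :
    ∀ r s, s₀ ≤ s →
      ⁅PowerSeries.coeff (R := A) r
          (shiftSeries c (PowerSeries.mk x) * shiftSeries (c+1) (PowerSeries.mk y)),
        g s⁆ = 0 := by
  have hX0 : PowerSeries.coeff (R := A) 0 (shiftSeries c (PowerSeries.mk x)) = 1 := by
    rw [coeff_shiftSeries_zero, PowerSeries.coeff_mk, hx0]
  have hZ0 : PowerSeries.coeff (R := A) 0 (shiftSeries (c+1) (PowerSeries.mk y)) = 1 := by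
    rw [coeff_shiftSeries_zero, PowerSeries.coeff_mk, hy0]
  have PX : ∀ m s, s₀ ≤ s →
      ⁅PowerSeries.coeff (R := A) (m+1) (shiftSeries c (PowerSeries.mk x)), g s⁆ =
        (c:A) * ⁅PowerSeries.coeff (R := A) m (shiftSeries c (PowerSeries.mk x)), g s⁆
        + ⁅PowerSeries.coeff (R := A) m (shiftSeries c (PowerSeries.mk x)), g (s+1)⁆
        + -(g s * PowerSeries.coeff (R := A) m (shiftSeries c (PowerSeries.mk x))) := by
    intro m s hs
    have h := core_step x g (fun a s' => -(g s' * x a)) c s₀ hx0 hxstep m s hs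
    rwa [coeff_shift_mk_neg, coeff_shift_mk_mul_left] at h
  have PZ : ∀ m s, s₀ ≤ s →
      ⁅PowerSeries.coeff (R := A) (m+1) (shiftSeries (c+1) (PowerSeries.mk y)), g s⁆ =
        ((c:A)+1) * ⁅PowerSeries.coeff (R := A) m (shiftSeries (c+1) (PowerSeries.mk y)), g s⁆
        + ⁅PowerSeries.coeff (R := A) m (shiftSeries (c+1) (PowerSeries.mk y)), g (s+1)⁆
        + g s * PowerSeries.coeff (R := A) m (shiftSeries (c+1) (PowerSeries.mk y)) := by
    intro m s hs
    have h := core_step y g (fun a s' => g s' * y a) (c+1) s₀ hy0 hystep m s hs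
    rw [coeff_shift_mk_mul_left] at h
    rwa [Int.cast_add, Int.cast_one] at h
  have hmul : ∀ N : ℕ,
      PowerSeries.coeff (R := A) N
          (shiftSeries c (PowerSeries.mk x) * shiftSeries (c+1) (PowerSeries.mk y))
        = ∑ a ∈ Finset.range (N+1),
            PowerSeries.coeff (R := A) a (shiftSeries c (PowerSeries.mk x))
              * PowerSeries.coeff (R := A) (N-a) (shiftSeries (c+1) (PowerSeries.mk y)) := by
    intro N
    rw [PowerSeries.coeff_mul, Finset.Nat.sum_antidiagonal_eq_sum_range_succ_mk]
  intro r
  induction r with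
  | zero =>
      intro s hs
      rw [hmul 0]
      simp [hX0, hZ0, lie_one_left]
  | succ r ih =>
      intro s hs
      have L1 : ⁅PowerSeries.coeff (R := A) (r+1)
            (shiftSeries c (PowerSeries.mk x) * shiftSeries (c+1) (PowerSeries.mk y)), g s⁆
          = ∑ a ∈ Finset.range (r+1),
              (PowerSeries.coeff (R := A) a (shiftSeries c (PowerSeries.mk x))
                  * ⁅PowerSeries.coeff (R := A) (r-a+1) (shiftSeries (c+1) (PowerSeries.mk y)), g s⁆
                + ⁅PowerSeries.coeff (R := A) (a+1) (shiftSeries c (PowerSeries.mk x)), g s⁆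
                  * PowerSeries.coeff (R := A) (r-a) (shiftSeries (c+1) (PowerSeries.mk y))) := by
        rw [hmul (r+1), lie_sum_left]
        simp only [lie_mul_left]
        rw [Finset.sum_add_distrib,
          Finset.sum_range_succ (fun a =>
            PowerSeries.coeff (R := A) a (shiftSeries c (PowerSeries.mk x))
              * ⁅PowerSeries.coeff (R := A) (r+1-a) (shiftSeries (c+1) (PowerSeries.mk y)), g s⁆) (r+1),
          Finset.sum_range_succ' (fun a =>
            ⁅PowerSeries.coeff (R := A) a (shiftSeries c (PowerSeries.mk x)), g s⁆
              * PowerSeries.coeff (R := A) (r+1-a) (shiftSeries (c+1) (PowerSeries.mk y))) (r+1)]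
        rw [Nat.sub_self, hZ0, lie_one_left, mul_zero, add_zero, hX0, lie_one_left, zero_mul,
          add_zero, ← Finset.sum_add_distrib]
        refine Finset.sum_congr rfl fun a ha => ?_
        simp only [Finset.mem_range] at ha
        rw [show r+1-a = r-a+1 from by omega, show r+1-(a+1) = r-a from by omega]
      have L2 : ∑ a ∈ Finset.range (r+1),
              (PowerSeries.coeff (R := A) a (shiftSeries c (PowerSeries.mk x))
                  * ⁅PowerSeries.coeff (R := A) (r-a+1) (shiftSeries (c+1) (PowerSeries.mk y)), g s⁆
                + ⁅PowerSeries.coeff (R := A) (a+1) (shiftSeries c (PowerSeries.mk x)), g s⁆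
                  * PowerSeries.coeff (R := A) (r-a) (shiftSeries (c+1) (PowerSeries.mk y)))
          = ∑ a ∈ Finset.range (r+1),
              (((c:A)+1) * (PowerSeries.coeff (R := A) a (shiftSeries c (PowerSeries.mk x))
                    * ⁅PowerSeries.coeff (R := A) (r-a) (shiftSeries (c+1) (PowerSeries.mk y)), g s⁆
                  + ⁅PowerSeries.coeff (R := A) a (shiftSeries c (PowerSeries.mk x)), g s⁆
                    * PowerSeries.coeff (R := A) (r-a) (shiftSeries (c+1) (PowerSeries.mk y)))
                + (PowerSeries.coeff (R := A) a (shiftSeries c (PowerSeries.mk x))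
                    * ⁅PowerSeries.coeff (R := A) (r-a) (shiftSeries (c+1) (PowerSeries.mk y)), g (s+1)⁆
                  + ⁅PowerSeries.coeff (R := A) a (shiftSeries c (PowerSeries.mk x)), g (s+1)⁆
                    * PowerSeries.coeff (R := A) (r-a) (shiftSeries (c+1) (PowerSeries.mk y)))) := by
        refine Finset.sum_congr rfl fun a ha => ?_
        rw [PZ (r-a) s hs, PX a s hs]
        exact keystep_f (c:A) _ _ _ _ (Int.cast_commute c _).eq
      have L3 : ((c:A)+1) * ⁅PowerSeries.coeff (R := A) r
              (shiftSeries c (PowerSeries.mk x) * shiftSeries (c+1) (PowerSeries.mk y)), g s⁆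
            + ⁅PowerSeries.coeff (R := A) r
              (shiftSeries c (PowerSeries.mk x) * shiftSeries (c+1) (PowerSeries.mk y)), g (s+1)⁆
          = ∑ a ∈ Finset.range (r+1),
              (((c:A)+1) * (PowerSeries.coeff (R := A) a (shiftSeries c (PowerSeries.mk x))
                    * ⁅PowerSeries.coeff (R := A) (r-a) (shiftSeries (c+1) (PowerSeries.mk y)), g s⁆
                  + ⁅PowerSeries.coeff (R := A) a (shiftSeries c (PowerSeries.mk x)), g s⁆
                    * PowerSeries.coeff (R := A) (r-a) (shiftSeries (c+1) (PowerSeries.mk y)))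
                + (PowerSeries.coeff (R := A) a (shiftSeries c (PowerSeries.mk x))
                    * ⁅PowerSeries.coeff (R := A) (r-a) (shiftSeries (c+1) (PowerSeries.mk y)), g (s+1)⁆
                  + ⁅PowerSeries.coeff (R := A) a (shiftSeries c (PowerSeries.mk x)), g (s+1)⁆
                    * PowerSeries.coeff (R := A) (r-a) (shiftSeries (c+1) (PowerSeries.mk y)))) := by
        rw [hmul r, lie_sum_left, lie_sum_left, Finset.mul_sum, ← Finset.sum_add_distrib]
        refine Finset.sum_congr rfl fun a ha => ?_
        rw [lie_mul_left, lie_mul_left]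
      rw [L1, L2, ← L3, ih s hs, ih (s+1) (by omega), mul_zero, zero_add]
/-- Abstract form of the quantum-determinant commutation (the `e`-side):
the coefficients of `x(u - c) · y(u - c - 1)` commute with all `g s`, `s ≥ s₀`. -/
lemma key_abstract_e (x y g : ℕ → A) (c : ℤ) (s₀ : ℕ)
    (hx0 : x 0 = 1) (hy0 : y 0 = 1)
    (hxstep : ∀ a s, s₀ ≤ s → ⁅x (a+1), g s⁆ = ⁅x a, g (s+1)⁆ + x a * g s)
    (hystep : ∀ a s, s₀ ≤ s → ⁅y (a+1), g s⁆ = ⁅y a, g (s+1)⁆ + -(y a * g s)) :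
    ∀ r s, s₀ ≤ s →
      ⁅PowerSeries.coeff (R := A) r
          (shiftSeries c (PowerSeries.mk x) * shiftSeries (c+1) (PowerSeries.mk y)),
        g s⁆ = 0 := by
  have hX0 : PowerSeries.coeff (R := A) 0 (shiftSeries c (PowerSeries.mk x)) = 1 := by
    rw [coeff_shiftSeries_zero, PowerSeries.coeff_mk, hx0]
  have hZ0 : PowerSeries.coeff (R := A) 0 (shiftSeries (c+1) (PowerSeries.mk y)) = 1 := by
    rw [coeff_shiftSeries_zero, PowerSeries.coeff_mk, hy0]
  have PX : ∀ m s, s₀ ≤ s →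
      ⁅PowerSeries.coeff (R := A) (m+1) (shiftSeries c (PowerSeries.mk x)), g s⁆ =
        (c:A) * ⁅PowerSeries.coeff (R := A) m (shiftSeries c (PowerSeries.mk x)), g s⁆
        + ⁅PowerSeries.coeff (R := A) m (shiftSeries c (PowerSeries.mk x)), g (s+1)⁆
        + PowerSeries.coeff (R := A) m (shiftSeries c (PowerSeries.mk x)) * g s := by
    intro m s hs
    have h := core_step x g (fun a s' => x a * g s') c s₀ hx0 hxstep m s hs
    rwa [coeff_shift_mk_mul_right] at h
  have PZ : ∀ m s, s₀ ≤ s →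
      ⁅PowerSeries.coeff (R := A) (m+1) (shiftSeries (c+1) (PowerSeries.mk y)), g s⁆ =
        ((c:A)+1) * ⁅PowerSeries.coeff (R := A) m (shiftSeries (c+1) (PowerSeries.mk y)), g s⁆
        + ⁅PowerSeries.coeff (R := A) m (shiftSeries (c+1) (PowerSeries.mk y)), g (s+1)⁆
        + -(PowerSeries.coeff (R := A) m (shiftSeries (c+1) (PowerSeries.mk y)) * g s) := by
    intro m s hs
    have h := core_step y g (fun a s' => -(y a * g s')) (c+1) s₀ hy0 hystep m s hs
    rw [coeff_shift_mk_neg, coeff_shift_mk_mul_right] at h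
    rwa [Int.cast_add, Int.cast_one] at h
  have hmul : ∀ N : ℕ,
      PowerSeries.coeff (R := A) N
          (shiftSeries c (PowerSeries.mk x) * shiftSeries (c+1) (PowerSeries.mk y))
        = ∑ a ∈ Finset.range (N+1),
            PowerSeries.coeff (R := A) a (shiftSeries c (PowerSeries.mk x))
              * PowerSeries.coeff (R := A) (N-a) (shiftSeries (c+1) (PowerSeries.mk y)) := by
    intro N
    rw [PowerSeries.coeff_mul, Finset.Nat.sum_antidiagonal_eq_sum_range_succ_mk]
  intro r
  induction r with
  | zero =>
      intro s hs
      rw [hmul 0]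
      simp [hX0, hZ0, lie_one_left]
  | succ r ih =>
      intro s hs
      have L1 : ⁅PowerSeries.coeff (R := A) (r+1)
            (shiftSeries c (PowerSeries.mk x) * shiftSeries (c+1) (PowerSeries.mk y)), g s⁆
          = ∑ a ∈ Finset.range (r+1),
              (PowerSeries.coeff (R := A) a (shiftSeries c (PowerSeries.mk x))
                  * ⁅PowerSeries.coeff (R := A) (r-a+1) (shiftSeries (c+1) (PowerSeries.mk y)), g s⁆
                + ⁅PowerSeries.coeff (R := A) (a+1) (shiftSeries c (PowerSeries.mk x)), g s⁆
                  * PowerSeries.coeff (R := A) (r-a) (shiftSeries (c+1) (PowerSeries.mk y))) := by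
        rw [hmul (r+1), lie_sum_left]
        simp only [lie_mul_left]
        rw [Finset.sum_add_distrib,
          Finset.sum_range_succ (fun a =>
            PowerSeries.coeff (R := A) a (shiftSeries c (PowerSeries.mk x))
              * ⁅PowerSeries.coeff (R := A) (r+1-a) (shiftSeries (c+1) (PowerSeries.mk y)), g s⁆) (r+1),
          Finset.sum_range_succ' (fun a =>
            ⁅PowerSeries.coeff (R := A) a (shiftSeries c (PowerSeries.mk x)), g s⁆
              * PowerSeries.coeff (R := A) (r+1-a) (shiftSeries (c+1) (PowerSeries.mk y))) (r+1)]
        rw [Nat.sub_self, hZ0, lie_one_left, mul_zero, add_zero, hX0, lie_one_left, zero_mul,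
          add_zero, ← Finset.sum_add_distrib]
        refine Finset.sum_congr rfl fun a ha => ?_
        simp only [Finset.mem_range] at ha
        rw [show r+1-a = r-a+1 from by omega, show r+1-(a+1) = r-a from by omega]
      have L2 : ∑ a ∈ Finset.range (r+1),
              (PowerSeries.coeff (R := A) a (shiftSeries c (PowerSeries.mk x))
                  * ⁅PowerSeries.coeff (R := A) (r-a+1) (shiftSeries (c+1) (PowerSeries.mk y)), g s⁆
                + ⁅PowerSeries.coeff (R := A) (a+1) (shiftSeries c (PowerSeries.mk x)), g s⁆
                  * PowerSeries.coeff (R := A) (r-a) (shiftSeries (c+1) (PowerSeries.mk y)))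
          = ∑ a ∈ Finset.range (r+1),
              ((c:A) * (PowerSeries.coeff (R := A) a (shiftSeries c (PowerSeries.mk x))
                    * ⁅PowerSeries.coeff (R := A) (r-a) (shiftSeries (c+1) (PowerSeries.mk y)), g s⁆
                  + ⁅PowerSeries.coeff (R := A) a (shiftSeries c (PowerSeries.mk x)), g s⁆
                    * PowerSeries.coeff (R := A) (r-a) (shiftSeries (c+1) (PowerSeries.mk y)))
                + (PowerSeries.coeff (R := A) a (shiftSeries c (PowerSeries.mk x))
                    * ⁅PowerSeries.coeff (R := A) (r-a) (shiftSeries (c+1) (PowerSeries.mk y)), g (s+1)⁆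
                  + ⁅PowerSeries.coeff (R := A) a (shiftSeries c (PowerSeries.mk x)), g (s+1)⁆
                    * PowerSeries.coeff (R := A) (r-a) (shiftSeries (c+1) (PowerSeries.mk y)))) := by
        refine Finset.sum_congr rfl fun a ha => ?_
        rw [PZ (r-a) s hs, PX a s hs]
        exact keystep_e (c:A) _ _ _ _ (Int.cast_commute c _).eq
      have L3 : (c:A) * ⁅PowerSeries.coeff (R := A) r
              (shiftSeries c (PowerSeries.mk x) * shiftSeries (c+1) (PowerSeries.mk y)), g s⁆
            + ⁅PowerSeries.coeff (R := A) r
              (shiftSeries c (PowerSeries.mk x) * shiftSeries (c+1) (PowerSeries.mk y)), g (s+1)⁆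
          = ∑ a ∈ Finset.range (r+1),
              ((c:A) * (PowerSeries.coeff (R := A) a (shiftSeries c (PowerSeries.mk x))
                    * ⁅PowerSeries.coeff (R := A) (r-a) (shiftSeries (c+1) (PowerSeries.mk y)), g s⁆
                  + ⁅PowerSeries.coeff (R := A) a (shiftSeries c (PowerSeries.mk x)), g s⁆
                    * PowerSeries.coeff (R := A) (r-a) (shiftSeries (c+1) (PowerSeries.mk y)))
                + (PowerSeries.coeff (R := A) a (shiftSeries c (PowerSeries.mk x))
                    * ⁅PowerSeries.coeff (R := A) (r-a) (shiftSeries (c+1) (PowerSeries.mk y)), g (s+1)⁆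
                  + ⁅PowerSeries.coeff (R := A) a (shiftSeries c (PowerSeries.mk x)), g (s+1)⁆
                    * PowerSeries.coeff (R := A) (r-a) (shiftSeries (c+1) (PowerSeries.mk y)))) := by
        rw [hmul r, lie_sum_left, lie_sum_left, Finset.mul_sum, ← Finset.sum_add_distrib]
        refine Finset.sum_congr rfl fun a ha => ?_
        rw [lie_mul_left, lie_mul_left]
      rw [L1, L2, ← L3, ih s hs, ih (s+1) (by omega), mul_zero, zero_add]

end Aux3

section Aux4

variable {A : Type} [Ring A]

lemma commute_coeff_shiftSeries {z : A} {g : PowerSeries A} (c : ℤ)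
    (h : ∀ t, Commute z (PowerSeries.coeff (R := A) t g)) (m : ℕ) :
    Commute z (PowerSeries.coeff (R := A) m (shiftSeries c g)) := by
  rw [shiftSeries, PowerSeries.coeff_mk]
  split
  · exact h 0
  · refine Commute.sum_right _ _ _ fun r hr => ?_
    exact ((Nat.commute_cast z _).mul_right ((Int.commute_cast z c).pow_right _)).mul_right (h r)

lemma commute_coeff_mul {z : A} {g h : PowerSeries A}
    (hg : ∀ t, Commute z (PowerSeries.coeff (R := A) t g))
    (hh : ∀ t, Commute z (PowerSeries.coeff (R := A) t h)) (m : ℕ) :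
    Commute z (PowerSeries.coeff (R := A) m (g * h)) := by
  rw [PowerSeries.coeff_mul]
  exact Commute.sum_right _ _ _ fun q hq => (hg q.1).mul_right (hh q.2)

lemma commute_coeff_listProd {z : A} : ∀ (L : List (PowerSeries A)),
    (∀ g ∈ L, ∀ t, Commute z (PowerSeries.coeff (R := A) t g)) →
    ∀ m, Commute z (PowerSeries.coeff (R := A) m L.prod)
  | [], h, m => by
      rw [List.prod_nil]
      simp only [PowerSeries.coeff_one]
      split
      · exact Commute.one_right z
      · exact Commute.zero_right z
  | (a :: L), h, m => by
      rw [List.prod_cons]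
      exact commute_coeff_mul (h a List.mem_cons_self)
        (commute_coeff_listProd L (fun g hg => h g (List.mem_cons_of_mem a hg))) m

namespace ShiftedYangian

variable {n : ℕ} {p : ℕ → ℕ} (Y : ShiftedYangian A n p)

lemma coeff_dS (i t : ℕ) : PowerSeries.coeff (R := A) t (Y.dS i) = Y.d i t :=
  PowerSeries.coeff_mk t (Y.d i)

lemma coeff_fS (i t : ℕ) : PowerSeries.coeff (R := A) t (Y.fS i) = Y.f i t :=
  PowerSeries.coeff_mk t (Y.f i)

lemma coeff_eS (i t : ℕ) : PowerSeries.coeff (R := A) t (Y.eS i) = Y.e i t :=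
  PowerSeries.coeff_mk t (Y.e i)

lemma keyF {j : ℕ} (hj1 : 1 ≤ j) (hj2 : j ≤ n - 1) (c : ℤ) (r s : ℕ) (hs : 1 ≤ s) :
    ⁅PowerSeries.coeff (R := A) r (shiftSeries c (Y.dS j) * shiftSeries (c+1) (Y.dS (j+1))),
      Y.f j s⁆ = 0 :=
  key_abstract_f (Y.d j) (Y.d (j+1)) (Y.f j) c 1 (Y.d_zero j) (Y.d_zero (j+1))
    (Y.step_df_self hj1 hj2) (Y.step_df_succ hj1 hj2) r s hs

lemma keyE {j : ℕ} (hj1 : 1 ≤ j) (hj2 : j ≤ n - 1) (c : ℤ) (r s : ℕ)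
    (hs : p (j+1) - p j + 1 ≤ s) :
    ⁅PowerSeries.coeff (R := A) r (shiftSeries c (Y.dS j) * shiftSeries (c+1) (Y.dS (j+1))),
      Y.e j s⁆ = 0 :=
  key_abstract_e (Y.d j) (Y.d (j+1)) (Y.e j) c (p (j+1) - p j + 1) (Y.d_zero j)
    (Y.d_zero (j+1)) (Y.step_de_self hj1 hj2) (Y.step_de_succ hj1 hj2) r s hs

lemma d_commute_aS (k t i m : ℕ) :
    Commute (Y.d k t) (PowerSeries.coeff (R := A) m (Y.aS i)) := by
  apply commute_coeff_listProd
  intro g hg t'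
  simp only [List.mem_map, List.mem_range] at hg
  obtain ⟨q, hq, rfl⟩ := hg
  refine commute_coeff_shiftSeries _ (fun t'' => ?_) t'
  rw [Y.coeff_dS]
  exact commute_iff_lie_eq.mpr (Y.rel_dd k (q+1) t t'')

lemma aS_commute_aS (i j r s : ℕ) :
    Commute (PowerSeries.coeff (R := A) r (Y.aS i)) (PowerSeries.coeff (R := A) s (Y.aS j)) := by
  apply commute_coeff_listProd
  intro g hg t'
  simp only [List.mem_map, List.mem_range] at hg
  obtain ⟨q, hq, rfl⟩ := hg
  refine commute_coeff_shiftSeries _ (fun t'' => ?_) t'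
  rw [Y.coeff_dS]
  exact (Y.d_commute_aS (q+1) t'' i r).symm

lemma aS_decomp (q m : ℕ) :
    Y.aS (q+2+m)
      = (((List.range q).map fun k : ℕ => shiftSeries (k:ℤ) (Y.dS (k+1))).prod)
        * ((shiftSeries (q:ℤ) (Y.dS (q+1)) * shiftSeries ((q:ℤ)+1) (Y.dS (q+1+1)))
          * (((List.range m).map fun k : ℕ =>
                shiftSeries ((q+2+k : ℕ):ℤ) (Y.dS (q+2+k+1))).prod)) := by
  rw [ShiftedYangian.aS, List.range_add, List.map_append, List.prod_append]
  rw [show List.range (q+2) = (List.range q ++ [q]) ++ [q+1] from by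
    rw [← List.range_succ, ← List.range_succ]]
  rw [List.map_append, List.prod_append, List.map_append, List.prod_append, List.map_map]
  simp only [List.map_cons, List.map_nil, List.prod_cons, List.prod_nil, mul_one,
    Function.comp_def]
  push_cast
  rw [mul_assoc, mul_assoc, mul_assoc]

end ShiftedYangian

end Aux4

section Aux5

variable {A : Type} [Ring A]

namespace ShiftedYangian

variable {n : ℕ} {p : ℕ → ℕ} (Y : ShiftedYangian A n p)

/-- Coefficients of `a_i(u)` commute with all `f_j^{(s)}` when `i ≠ j`. -/
lemma f_commute_aS {i j : ℕ} (hin : i ≤ n) (hj1 : 1 ≤ j) (hj2 : j ≤ n - 1)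
    (hij : i ≠ j) (r s : ℕ) :
    Commute (PowerSeries.coeff (R := A) r (Y.aS i)) (Y.f j s) := by
  rcases Nat.eq_zero_or_pos s with rfl | hs
  · rw [Y.f_zero]; exact Commute.zero_right _
  have hfac : ∀ q t, q + 1 ≠ j → q + 1 ≠ j + 1 → q + 1 ≤ n →
      Commute (Y.f j s) (Y.d (q+1) t) := by
    intro q t hq1 hq2 hqn
    rcases Nat.eq_zero_or_pos t with rfl | ht
    · rw [Y.d_zero]; exact Commute.one_right _
    · have h := Y.rel_df (q+1) j t s (by omega) hqn hj1 hj2 ht hs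
      rw [if_neg hq2, if_neg hq1, sub_zero, zero_smul] at h
      exact (commute_iff_lie_eq.mpr h).symm
  rcases lt_or_gt_of_ne hij with hlt | hgt
  · -- i < j : every factor of a_i commutes with f_j
    refine (commute_coeff_listProd _ ?_ r).symm
    intro g hg t
    simp only [List.mem_map, List.mem_range] at hg
    obtain ⟨q, hq, rfl⟩ := hg
    refine commute_coeff_shiftSeries _ (fun t'' => ?_) t
    rw [Y.coeff_dS]
    exact hfac q t'' (by omega) (by omega) (by omega)
  · -- i > j : use the quantum-determinant block at positions j, j+1
    obtain ⟨q, rfl⟩ : ∃ q, j = q + 1 := ⟨j - 1, by omega⟩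
    obtain ⟨m, rfl⟩ : ∃ m, i = q + 2 + m := ⟨i - (q + 2), by omega⟩
    rw [Y.aS_decomp]
    refine (commute_coeff_mul ?_ ?_ r).symm
    · -- the factors d_1, ..., d_{j-1}
      refine commute_coeff_listProd _ ?_
      intro g hg t
      simp only [List.mem_map, List.mem_range] at hg
      obtain ⟨q', hq', rfl⟩ := hg
      refine commute_coeff_shiftSeries _ (fun t'' => ?_) t
      rw [Y.coeff_dS]
      exact hfac q' t'' (by omega) (by omega) (by omega)
    · refine commute_coeff_mul ?_ ?_
      · -- the block d_j(u-j+1) d_{j+1}(u-j)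
        intro t
        exact (commute_iff_lie_eq.mpr (Y.keyF hj1 hj2 (q:ℤ) t s hs)).symm
      · -- the factors d_{j+2}, ..., d_i
        refine commute_coeff_listProd _ ?_
        intro g hg t
        simp only [List.mem_map, List.mem_range] at hg
        obtain ⟨q', hq', rfl⟩ := hg
        refine commute_coeff_shiftSeries _ (fun t'' => ?_) t
        rw [show q+2+q'+1 = (q+2+q')+1 from rfl, Y.coeff_dS]
        exact hfac (q+2+q') t'' (by omega) (by omega) (by omega)

/-- Coefficients of `a_j(u)` commute with all `e_i^{(t)}` when `i ≠ j`. -/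
lemma e_commute_aS {i j : ℕ} (hi1 : 1 ≤ i) (hi2 : i ≤ n - 1) (hjn : j ≤ n)
    (hij : i ≠ j) (t m : ℕ) :
    Commute (Y.e i t) (PowerSeries.coeff (R := A) m (Y.aS j)) := by
  rcases Nat.lt_or_ge t (p (i+1) - p i + 1) with ht | ht
  · rw [Y.e_zero i t ht]; exact Commute.zero_left _
  have hfac : ∀ q t', q + 1 ≠ i → q + 1 ≠ i + 1 → q + 1 ≤ n →
      Commute (Y.e i t) (Y.d (q+1) t') := by
    intro q t' hq1 hq2 hqn
    rcases Nat.eq_zero_or_pos t' with rfl | ht'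
    · rw [Y.d_zero]; exact Commute.one_right _
    · have h := Y.rel_de (q+1) i t' t (by omega) hqn hi1 hi2 ht' ht
      rw [if_neg hq1, if_neg hq2, sub_zero, zero_smul] at h
      exact (commute_iff_lie_eq.mpr h).symm
  rcases lt_or_gt_of_ne hij with hlt | hgt
  · -- i < j : use the block at positions i, i+1 inside a_j
    obtain ⟨q, rfl⟩ : ∃ q, i = q + 1 := ⟨i - 1, by omega⟩
    obtain ⟨m', rfl⟩ : ∃ m', j = q + 2 + m' := ⟨j - (q + 2), by omega⟩
    rw [Y.aS_decomp]
    refine (commute_coeff_mul ?_ ?_ m)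
    · refine commute_coeff_listProd _ ?_
      intro g hg t'
      simp only [List.mem_map, List.mem_range] at hg
      obtain ⟨q', hq', rfl⟩ := hg
      refine commute_coeff_shiftSeries _ (fun t'' => ?_) t'
      rw [Y.coeff_dS]
      exact (hfac q' t'' (by omega) (by omega) (by omega)).symm.symm
    · refine commute_coeff_mul ?_ ?_
      · intro t'
        exact (commute_iff_lie_eq.mpr (Y.keyE hi1 hi2 (q:ℤ) t' t ht)).symm
      · refine commute_coeff_listProd _ ?_
        intro g hg t'
        simp only [List.mem_map, List.mem_range] at hg
        obtain ⟨q', hq', rfl⟩ := hg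
        refine commute_coeff_shiftSeries _ (fun t'' => ?_) t'
        rw [show q+2+q'+1 = (q+2+q')+1 from rfl, Y.coeff_dS]
        exact hfac (q+2+q') t'' (by omega) (by omega) (by omega)
  · -- i > j : every factor of a_j commutes with e_i
    refine commute_coeff_listProd _ ?_ m
    intro g hg t'
    simp only [List.mem_map, List.mem_range] at hg
    obtain ⟨q, hq, rfl⟩ := hg
    refine commute_coeff_shiftSeries _ (fun t'' => ?_) t'
    rw [Y.coeff_dS]
    exact hfac q t'' (by omega) (by omega) (by omega)

/-- Coefficients of `a_i(u)` commute with coefficients of `c_j(v)` for `i ≠ j`. -/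
lemma aS_commute_cS {i j : ℕ} (hin : i ≤ n) (hj1 : 1 ≤ j) (hj2 : j ≤ n - 1)
    (hij : i ≠ j) (r s : ℕ) :
    Commute (PowerSeries.coeff (R := A) r (Y.aS i)) (PowerSeries.coeff (R := A) s (Y.cS j)) := by
  rw [ShiftedYangian.cS]
  refine commute_coeff_mul ?_ ?_ s
  · intro t
    refine commute_coeff_shiftSeries _ (fun t' => ?_) t
    rw [Y.coeff_fS]
    exact Y.f_commute_aS hin hj1 hj2 hij r t'
  · intro t
    exact Y.aS_commute_aS i j r t

/-- Any `e_i^{(a)}` commutes with coefficients of `c_j(v)` for `i ≠ j`. -/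
lemma e_commute_cS {i j : ℕ} (hi1 : 1 ≤ i) (hi2 : i ≤ n - 1) (hj1 : 1 ≤ j)
    (hj2 : j ≤ n - 1) (hij : i ≠ j) (a s : ℕ) :
    Commute (Y.e i a) (PowerSeries.coeff (R := A) s (Y.cS j)) := by
  rcases Nat.lt_or_ge a (p (i+1) - p i + 1) with ha | ha
  · rw [Y.e_zero i a ha]; exact Commute.zero_left _
  rw [ShiftedYangian.cS]
  refine commute_coeff_mul ?_ ?_ s
  · intro t
    refine commute_coeff_shiftSeries _ (fun t' => ?_) t
    rw [Y.coeff_fS]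
    rcases Nat.eq_zero_or_pos t' with rfl | ht'
    · rw [Y.f_zero]; exact Commute.zero_right _
    · have h := Y.rel_ef i j a t' hi1 hi2 hj1 hj2 ha ht'
      rw [if_neg hij] at h
      exact commute_iff_lie_eq.mpr h
  · intro t
    exact Y.e_commute_aS hi1 hi2 (by omega) hij a t

end ShiftedYangian

end Aux5

open ShiftedYangian in
/-- In the shifted Yangian `Y_π(gl_n)`: `[a_i(u), c_j(v)] = 0` and `[b_i(u), c_j(v)] = 0`
for `i ≠ j`, coefficientwise. -/
theorem aS_cS_commute_and_bS_cS_commute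
    {A : Type} [Ring A] {n : ℕ} {p : ℕ → ℕ}
    (hp : ∀ k, p k ≤ p (k+1)) (Y : ShiftedYangian A n p) :
    (∀ i j r s : ℕ, 1 ≤ i → i ≤ n → 1 ≤ j → j ≤ n - 1 → i ≠ j →
      ⁅PowerSeries.coeff (R := A) r (Y.aS i), PowerSeries.coeff (R := A) s (Y.cS j)⁆ = 0) ∧
    (∀ i j r s : ℕ, 1 ≤ i → i ≤ n - 1 → 1 ≤ j → j ≤ n - 1 → i ≠ j →
      ⁅PowerSeries.coeff (R := A) r (Y.bS i), PowerSeries.coeff (R := A) s (Y.cS j)⁆ = 0) := by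
  constructor
  · intro i j r s _ hin hj1 hj2 hij
    exact commute_iff_lie_eq.mp (Y.aS_commute_cS hin hj1 hj2 hij r s)
  · intro i j r s hi1 hi2 hj1 hj2 hij
    refine commute_iff_lie_eq.mp (Commute.symm ?_)
    rw [ShiftedYangian.bS]
    refine commute_coeff_mul
      (fun t => (Y.aS_commute_cS (le_trans hi2 (Nat.sub_le n 1)) hj1 hj2 hij t s).symm)
      (fun t => ?_) r
    refine commute_coeff_shiftSeries _ (fun t' => ?_) t
    rw [Y.coeff_eS]
    exact (Y.e_commute_cS hi1 hi2 hj1 hj2 hij t' s).symm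
end
end

section
/- In the shifted Yangian Y_π(gl_2) with π = (p_1, p_2), p_1 ≤ p_2, one has the identity b_1(u) = d_1(u)e_1(u) = (1 - u^{-1})^{p_2-p_1} e_1(u-1) d_1(u) of formal series in u^{-1}. -/
open scoped Classical
open PowerSeries

noncomputable section

variable {A : Type} [Ring A]

namespace B1Aux

variable {A : Type} [Ring A]

/-- A power series whose coefficients commute with everything commutes with every series. -/
lemma central_mul (φ f : PowerSeries A)
    (h : ∀ n : ℕ, ∀ x : A, Commute ((PowerSeries.coeff (R := A) n) φ) x) : φ * f = f * φ := by
  ext n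
  rw [PowerSeries.coeff_mul, PowerSeries.coeff_mul]
  conv_rhs => rw [← Finset.HasAntidiagonal.map_swap_antidiagonal, Finset.sum_map]
  simp only [Function.Embedding.coeFn_mk, Prod.fst_swap, Prod.snd_swap]
  exact Finset.sum_congr rfl fun p _ => (h p.1 (PowerSeries.coeff (R := A) p.2 f))

/-- The series `Σ_{b ≥ r} C(b-1, r-1) X^b`, i.e. `X^r (1-X)^{-r}`. -/
def W (A : Type) [Ring A] (r : ℕ) : PowerSeries A :=
  PowerSeries.mk fun b => if b = 0 then 0 else ((b-1).choose (r-1) : A)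

lemma coeff_W (r b : ℕ) :
    PowerSeries.coeff (R := A) b (W A r) = if b = 0 then 0 else ((b-1).choose (r-1) : A) :=
  PowerSeries.coeff_mk _ _

lemma W_comm (r : ℕ) (f : PowerSeries A) : W A r * f = f * W A r := by
  refine central_mul _ _ fun n x => ?_
  rw [coeff_W]
  split_ifs
  · exact Commute.zero_left x
  · exact Nat.cast_commute _ x

lemma one_sub_X_pow_comm (m : ℕ) (f : PowerSeries A) :
    ((1 : PowerSeries A) - X) ^ m * f = f * ((1 : PowerSeries A) - X) ^ m :=
  (((Commute.one_left f).sub_left ((PowerSeries.commute_X f).symm)).pow_left m).eq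

lemma W_low (r b : ℕ) (hb : b < r) : PowerSeries.coeff (R := A) b (W A r) = 0 := by
  rw [coeff_W]
  split_ifs with h
  · rfl
  · rw [Nat.choose_eq_zero_of_lt (by omega), Nat.cast_zero]

lemma mul_low_left {r : ℕ} {φ ψ : PowerSeries A} (h : ∀ b, b < r → PowerSeries.coeff (R := A) b φ = 0) :
    ∀ b, b < r → PowerSeries.coeff (R := A) b (φ * ψ) = 0 := by
  intro b hb
  rw [PowerSeries.coeff_mul]
  refine Finset.sum_eq_zero fun p hp => ?_
  have := Finset.HasAntidiagonal.mem_antidiagonal.mp hp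
  rw [h p.1 (by omega), zero_mul]

lemma mul_low_right {r : ℕ} {φ ψ : PowerSeries A} (h : ∀ b, b < r → PowerSeries.coeff (R := A) b ψ = 0) :
    ∀ b, b < r → PowerSeries.coeff (R := A) b (φ * ψ) = 0 := by
  intro b hb
  rw [PowerSeries.coeff_mul]
  refine Finset.sum_eq_zero fun p hp => ?_
  have := Finset.HasAntidiagonal.mem_antidiagonal.mp hp
  rw [h p.2 (by omega), mul_zero]

/- =====  commutative (ℤ) computations  ===== -/

lemma one_sub_X_mul_coeff_succ (f : PowerSeries ℤ) (n : ℕ) :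
    PowerSeries.coeff (R := ℤ) (n+1) (((1 : PowerSeries ℤ) - X) * f)
      = PowerSeries.coeff (R := ℤ) (n+1) f - PowerSeries.coeff (R := ℤ) n f := by
  rw [sub_mul, one_mul, map_sub, PowerSeries.coeff_succ_X_mul]

lemma one_sub_X_mul_coeff_zero (f : PowerSeries ℤ) :
    PowerSeries.coeff (R := ℤ) 0 (((1 : PowerSeries ℤ) - X) * f) = PowerSeries.coeff (R := ℤ) 0 f := by
  rw [sub_mul, one_mul, map_sub]
  simp [PowerSeries.coeff_zero_eq_constantCoeff]

lemma step1 : ((1 : PowerSeries ℤ) - X) * W ℤ 1 = X := by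
  ext n
  cases n with
  | zero => rw [one_sub_X_mul_coeff_zero, coeff_W]; simp
  | succ k =>
    rw [one_sub_X_mul_coeff_succ, coeff_W, coeff_W, PowerSeries.coeff_X]
    cases k with
    | zero => simp
    | succ k' => simp [Nat.choose]

lemma step2 (r : ℕ) (hr : 1 ≤ r) :
    ((1 : PowerSeries ℤ) - X) * W ℤ (r+1) = X * W ℤ r := by
  ext n
  cases n with
  | zero =>
    rw [one_sub_X_mul_coeff_zero, coeff_W]
    simp [PowerSeries.coeff_zero_eq_constantCoeff]
  | succ k =>
    rw [one_sub_X_mul_coeff_succ, coeff_W, coeff_W, PowerSeries.coeff_succ_X_mul, coeff_W]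
    cases k with
    | zero => simp [Nat.choose_eq_zero_of_lt hr]
    | succ k' =>
      simp only [Nat.succ_ne_zero, if_false, Nat.add_sub_cancel]
      obtain ⟨r', rfl⟩ : ∃ r', r = r' + 1 := ⟨r - 1, by omega⟩
      simp only [Nat.add_sub_cancel]
      have hps : (k' + 1).choose (r' + 1) = k'.choose r' + k'.choose (r'+1) :=
        Nat.choose_succ_succ _ _
      push_cast [hps]
      ring

lemma pow_mul_W (r : ℕ) (hr : 1 ≤ r) :
    ((1 : PowerSeries ℤ) - X) ^ r * W ℤ r = X ^ r := by
  induction r with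
  | zero => omega
  | succ k ih =>
    cases Nat.eq_zero_or_pos k with
    | inl h => subst h; simpa using step1
    | inr hk =>
      have : ((1 : PowerSeries ℤ) - X) ^ (k+1) * W ℤ (k+1)
          = ((1 : PowerSeries ℤ) - X) ^ k * (((1 : PowerSeries ℤ) - X) * W ℤ (k+1)) := by ring
      rw [this, step2 k hk, show ((1 : PowerSeries ℤ) - X) ^ k * (X * W ℤ k)
          = X * (((1 : PowerSeries ℤ) - X) ^ k * W ℤ k) by ring, ih hk]
      ring

lemma geo (m : ℕ) : ∀ j, m ≤ j →
    X * ∑ i ∈ Finset.Ico m j, ((1 : PowerSeries ℤ) - X) ^ i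
      = ((1 : PowerSeries ℤ) - X) ^ m - ((1 : PowerSeries ℤ) - X) ^ j := by
  intro j
  induction j with
  | zero => intro h; interval_cases m; simp
  | succ k ih =>
    intro hm
    cases Nat.lt_or_ge k m with
    | inl h =>
      have : m = k + 1 := by omega
      subst this
      simp
    | inr h =>
      rw [Finset.sum_Ico_succ_top h, mul_add, ih h]
      ring

lemma unit_one_sub_X : IsUnit ((1 : PowerSeries ℤ) - X) := by
  rw [PowerSeries.isUnit_iff_constantCoeff]
  simp

lemma KEYZ (m j : ℕ) (h : m + 1 ≤ j) :
    ((1 : PowerSeries ℤ) - X) ^ m *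
        (W ℤ j - ∑ r ∈ Finset.Icc (m+1) j, W ℤ r * X ^ (j - r + 1)) = X ^ j := by
  have hu : IsUnit (((1 : PowerSeries ℤ) - X) ^ j) := unit_one_sub_X.pow j
  apply hu.mul_left_cancel
  have e1 : ((1 : PowerSeries ℤ) - X) ^ j *
      (((1 : PowerSeries ℤ) - X) ^ m *
        (W ℤ j - ∑ r ∈ Finset.Icc (m+1) j, W ℤ r * X ^ (j - r + 1)))
      = ((1 : PowerSeries ℤ) - X) ^ m * (((1 : PowerSeries ℤ) - X) ^ j * W ℤ j)
        - ∑ r ∈ Finset.Icc (m+1) j,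
            ((1 : PowerSeries ℤ) - X) ^ (m + j) * W ℤ r * X ^ (j - r + 1) := by
    have expand : ((1 : PowerSeries ℤ) - X) ^ j *
        (((1 : PowerSeries ℤ) - X) ^ m *
          (∑ r ∈ Finset.Icc (m+1) j, W ℤ r * X ^ (j - r + 1)))
        = ∑ r ∈ Finset.Icc (m+1) j,
            ((1 : PowerSeries ℤ) - X) ^ (m + j) * W ℤ r * X ^ (j - r + 1) := by
      rw [Finset.mul_sum, Finset.mul_sum]
      refine Finset.sum_congr rfl fun r hr => ?_
      rw [pow_add]
      ring
    rw [mul_sub, mul_sub, expand]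
    congr 1
    ring
  rw [e1, pow_mul_W j (by omega)]
  have e2 : ∀ r ∈ Finset.Icc (m+1) j,
      ((1 : PowerSeries ℤ) - X) ^ (m + j) * W ℤ r * X ^ (j - r + 1)
        = ((1 : PowerSeries ℤ) - X) ^ (m + j - r) * X ^ (j + 1) := by
    intro r hr
    rw [Finset.mem_Icc] at hr
    have h1 : ((1 : PowerSeries ℤ) - X) ^ (m + j)
        = ((1 : PowerSeries ℤ) - X) ^ (m + j - r) * ((1 : PowerSeries ℤ) - X) ^ r := by
      rw [← pow_add]
      congr 1
      omega
    rw [h1, mul_assoc _ _ (W ℤ r), pow_mul_W r (by omega), mul_assoc, ← pow_add,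
      show r + (j - r + 1) = j + 1 by omega]
  rw [Finset.sum_congr rfl e2]
  have e3 : ∑ r ∈ Finset.Icc (m+1) j, ((1 : PowerSeries ℤ) - X) ^ (m + j - r) * X ^ (j + 1)
      = (∑ i ∈ Finset.Ico m j, ((1 : PowerSeries ℤ) - X) ^ i) * X ^ (j + 1) := by
    rw [Finset.sum_mul]
    refine Finset.sum_nbij' (fun r => m + j - r) (fun i => m + j - i) ?_ ?_ ?_ ?_
      (fun r hr => rfl)
    · intro r hr; rw [Finset.mem_Icc] at hr
      show m + j - r ∈ Finset.Ico m j
      rw [Finset.mem_Ico]; omega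
    · intro i hi; rw [Finset.mem_Ico] at hi
      show m + j - i ∈ Finset.Icc (m+1) j
      rw [Finset.mem_Icc]; omega
    · intro r hr; rw [Finset.mem_Icc] at hr
      show m + j - (m + j - r) = r
      omega
    · intro i hi; rw [Finset.mem_Ico] at hi
      show m + j - (m + j - i) = i
      omega
  rw [e3]
  have e4 : (∑ i ∈ Finset.Ico m j, ((1 : PowerSeries ℤ) - X) ^ i) * X ^ (j + 1)
      = (X * ∑ i ∈ Finset.Ico m j, ((1 : PowerSeries ℤ) - X) ^ i) * X ^ j := by
    ring
  rw [e4, geo m j (by omega)]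
  ring

lemma map_W (r : ℕ) : PowerSeries.map (Int.castRingHom A) (W ℤ r) = W A r := by
  ext b
  rw [PowerSeries.coeff_map, coeff_W, coeff_W]
  split_ifs
  · simp
  · simp

lemma KEYA (m j : ℕ) (h : m + 1 ≤ j) :
    ((1 : PowerSeries A) - X) ^ m *
        (W A j - ∑ r ∈ Finset.Icc (m+1) j, W A r * X ^ (j - r + 1)) = X ^ j := by
  have := congrArg (PowerSeries.map (Int.castRingHom A)) (KEYZ m j h)
  simpa [map_sub, map_sum, map_mul, map_pow, map_W, PowerSeries.map_X] using this

/- =====  truncated equality  ===== -/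

def Rel (N : ℕ) (f g : PowerSeries A) : Prop :=
  ∀ n, n ≤ N → PowerSeries.coeff (R := A) n f = PowerSeries.coeff (R := A) n g

lemma Rel.mul_left {N : ℕ} {f g : PowerSeries A} (φ : PowerSeries A) (h : Rel N f g) :
    Rel N (φ * f) (φ * g) := by
  intro n hn
  rw [PowerSeries.coeff_mul, PowerSeries.coeff_mul]
  refine Finset.sum_congr rfl fun q hq => ?_
  have := Finset.HasAntidiagonal.mem_antidiagonal.mp hq
  rw [h q.2 (by omega)]

lemma Rel.mul_right {N : ℕ} {f g : PowerSeries A} (φ : PowerSeries A) (h : Rel N f g) :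
    Rel N (f * φ) (g * φ) := by
  intro n hn
  rw [PowerSeries.coeff_mul, PowerSeries.coeff_mul]
  refine Finset.sum_congr rfl fun q hq => ?_
  have := Finset.HasAntidiagonal.mem_antidiagonal.mp hq
  rw [h q.1 (by omega)]

lemma Rel.mul_low {N r : ℕ} {φ f g : PowerSeries A}
    (hφ : ∀ b, b < r → PowerSeries.coeff (R := A) b φ = 0)
    (h : ∀ nn, nn + r ≤ N + 1 → PowerSeries.coeff (R := A) nn f = PowerSeries.coeff (R := A) nn g) :
    Rel N (φ * f) (φ * g) := by
  intro n hn
  rw [PowerSeries.coeff_mul, PowerSeries.coeff_mul]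
  refine Finset.sum_congr rfl fun q hq => ?_
  have hmem := Finset.HasAntidiagonal.mem_antidiagonal.mp hq
  rcases lt_or_ge q.1 r with hc | hc
  · rw [hφ q.1 hc, zero_mul, zero_mul]
  · rw [h q.2 (by omega)]

lemma Rel.sum {N : ℕ} {s : Finset ℕ} {f g : ℕ → PowerSeries A}
    (h : ∀ r ∈ s, Rel N (f r) (g r)) : Rel N (∑ r ∈ s, f r) (∑ r ∈ s, g r) := by
  intro n hn
  rw [map_sum, map_sum]
  exact Finset.sum_congr rfl fun r hr => h r hr n hn


/-- The key computation: if the `star` commutation relation holds, then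
`d(u) e(u) = (1-u⁻¹)^m e(u-1) d(u)` coefficientwise. -/
lemma main_aux (m N : ℕ) (d e : ℕ → A)
    (he0 : ∀ s, s ≤ m → e s = 0)
    (star : ∀ s, m + 1 ≤ s →
      PowerSeries.C (R := A) (e s) * PowerSeries.mk d
        = PowerSeries.mk d *
            (PowerSeries.C (R := A) (e s) - PowerSeries.X * PowerSeries.mk fun k => e (s + k))) :
    PowerSeries.coeff (R := A) N (PowerSeries.mk d * PowerSeries.mk e)
      = PowerSeries.coeff (R := A) N
          (((1 : PowerSeries A) - PowerSeries.X) ^ m * shiftSeries 1 (PowerSeries.mk e)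
            * PowerSeries.mk d) := by
  classical
  set D : PowerSeries A := PowerSeries.mk d with hD
  set Q : PowerSeries A := ((1 : PowerSeries A) - PowerSeries.X) ^ m with hQ
  set I : Finset ℕ := Finset.Icc (m+1) N with hI
  -- Step 1 : `e(u)` agrees with a finite sum up to degree `N`.
  have h1 : Rel N (PowerSeries.mk e)
      (∑ j ∈ I, PowerSeries.X ^ j * PowerSeries.C (R := A) (e j)) := by
    intro n hn
    rw [map_sum, PowerSeries.coeff_mk]
    have hterm : ∀ j ∈ I, PowerSeries.coeff (R := A) n (PowerSeries.X ^ j * PowerSeries.C (R := A) (e j))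
        = if j = n then e j else 0 := by
      intro j _
      rw [PowerSeries.coeff_X_pow_mul', PowerSeries.coeff_C]
      split_ifs <;> first | rfl | omega
    rw [Finset.sum_congr rfl hterm, Finset.sum_ite_eq' I n e]
    by_cases hmem : n ∈ I
    · rw [if_pos hmem]
    · rw [if_neg hmem]
      rw [hI, Finset.mem_Icc] at hmem
      exact he0 n (by omega)
  -- Step 2 : the shifted series agrees with a finite sum up to degree `N`.
  have h2 : Rel N (shiftSeries 1 (PowerSeries.mk e))
      (∑ r ∈ I, W A r * PowerSeries.C (R := A) (e r)) := by
    intro n hn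
    rw [map_sum]
    simp only [PowerSeries.coeff_mul_C, coeff_W]
    rw [shiftSeries, PowerSeries.coeff_mk]
    by_cases hn0 : n = 0
    · subst hn0
      rw [if_pos rfl, PowerSeries.coeff_mk, he0 0 (Nat.zero_le m)]
      exact (Finset.sum_eq_zero fun r _ => by rw [if_pos rfl, zero_mul]).symm
    · rw [if_neg hn0]
      simp only [Int.cast_one, one_pow, mul_one, PowerSeries.coeff_mk, if_neg hn0]
      have hLeft : (∑ r ∈ Finset.Icc 1 n, (((n-1).choose (r-1) : A)) * e r)
          = ∑ r ∈ Finset.Icc 1 N, (((n-1).choose (r-1) : A)) * e r := by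
        apply Finset.sum_subset (Finset.Icc_subset_Icc_right hn)
        intro x hx hxn
        rw [Finset.mem_Icc] at hx
        simp only [Finset.mem_Icc, not_and, not_le] at hxn
        rw [Nat.choose_eq_zero_of_lt (by omega), Nat.cast_zero, zero_mul]
      have hRight : (∑ r ∈ I, (((n-1).choose (r-1) : A)) * e r)
          = ∑ r ∈ Finset.Icc 1 N, (((n-1).choose (r-1) : A)) * e r := by
        rw [hI]
        apply Finset.sum_subset (Finset.Icc_subset_Icc_left (by omega))
        intro x hx hxn
        simp only [Finset.mem_Icc, not_and, not_le] at hx hxn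
        rw [he0 x (by omega), mul_zero]
      rw [hLeft, hRight]
  -- Step 3 : move `e`-coefficients across `d(u)` using `star`.
  have c2 : Q * (∑ r ∈ I, W A r * PowerSeries.C (R := A) (e r)) * D
      = ∑ r ∈ I, (Q * (W A r * D)) *
          (PowerSeries.C (R := A) (e r) - PowerSeries.X * PowerSeries.mk fun k => e (r + k)) := by
    rw [mul_assoc, Finset.sum_mul, Finset.mul_sum]
    refine Finset.sum_congr rfl fun r hr => ?_
    have hr' : m + 1 ≤ r := by
      rw [hI, Finset.mem_Icc] at hr
      exact hr.1
    rw [mul_assoc (W A r), star r hr', ← mul_assoc (W A r), ← mul_assoc]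
  have lowQWD : ∀ r : ℕ, ∀ b, b < r → PowerSeries.coeff (R := A) b (Q * (W A r * D)) = 0 := by
    intro r b hb
    exact mul_low_right (mul_low_left (fun b' hb' => W_low r b' hb')) b hb
  -- Step 4 : truncate the tails.
  have c3 : Rel N
      (∑ r ∈ I, (Q * (W A r * D)) *
        (PowerSeries.C (R := A) (e r) - PowerSeries.X * PowerSeries.mk fun k => e (r + k)))
      (∑ r ∈ I, (Q * (W A r * D)) *
        (PowerSeries.C (R := A) (e r)
          - ∑ j ∈ Finset.Icc r N, PowerSeries.X ^ (j - r + 1) * PowerSeries.C (R := A) (e j))) := by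
    refine Rel.sum fun r hr => ?_
    refine Rel.mul_low (lowQWD r) ?_
    intro nn hnn
    rw [map_sub, map_sub]
    congr 1
    cases nn with
    | zero =>
      have hL : PowerSeries.coeff (R := A) 0
          (PowerSeries.X * PowerSeries.mk fun k => e (r + k)) = 0 := by
        simp
      have hR : PowerSeries.coeff (R := A) 0
          (∑ j ∈ Finset.Icc r N, PowerSeries.X ^ (j - r + 1) * PowerSeries.C (R := A) (e j)) = 0 := by
        rw [map_sum]
        refine Finset.sum_eq_zero fun j _ => ?_
        rw [PowerSeries.coeff_X_pow_mul', if_neg (by omega)]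
      rw [hL, hR]
    | succ k =>
      rw [PowerSeries.coeff_succ_X_mul, PowerSeries.coeff_mk, map_sum]
      have hterm : ∀ j ∈ Finset.Icc r N,
          PowerSeries.coeff (R := A) (k+1)
            (PowerSeries.X ^ (j - r + 1) * PowerSeries.C (R := A) (e j))
            = if j = r + k then e j else 0 := by
        intro j hj
        rw [Finset.mem_Icc] at hj
        rw [PowerSeries.coeff_X_pow_mul', PowerSeries.coeff_C]
        split_ifs <;> first | rfl | omega
      rw [Finset.sum_congr rfl hterm, Finset.sum_ite_eq' _ (r+k) e,
        if_pos (by rw [Finset.mem_Icc]; omega)]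
  -- Step 5 : use the key binomial identity to recombine.
  have hQD : ∀ r : ℕ, Q * (W A r * D) = D * (Q * W A r) := by
    intro r
    rw [W_comm r D, ← mul_assoc, hQ, one_sub_X_pow_comm m D, mul_assoc]
  have c4 : (∑ r ∈ I, (Q * (W A r * D)) *
        (PowerSeries.C (R := A) (e r)
          - ∑ j ∈ Finset.Icc r N, PowerSeries.X ^ (j - r + 1) * PowerSeries.C (R := A) (e j)))
      = D * ∑ j ∈ I, PowerSeries.X ^ j * PowerSeries.C (R := A) (e j) := by
    have step1 : ∀ r ∈ I, (Q * (W A r * D)) *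
        (PowerSeries.C (R := A) (e r)
          - ∑ j ∈ Finset.Icc r N, PowerSeries.X ^ (j - r + 1) * PowerSeries.C (R := A) (e j))
        = D * ((Q * W A r) *
          (PowerSeries.C (R := A) (e r)
            - ∑ j ∈ Finset.Icc r N, PowerSeries.X ^ (j - r + 1) * PowerSeries.C (R := A) (e j))) := by
      intro r _
      rw [hQD r, mul_assoc]
    rw [Finset.sum_congr rfl step1, ← Finset.mul_sum]
    congr 1
    have expand : ∀ r ∈ I, (Q * W A r) *
        (PowerSeries.C (R := A) (e r)
          - ∑ j ∈ Finset.Icc r N, PowerSeries.X ^ (j - r + 1) * PowerSeries.C (R := A) (e j))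
        = (Q * W A r) * PowerSeries.C (R := A) (e r)
          - ∑ j ∈ Finset.Icc r N,
              (Q * (W A r * PowerSeries.X ^ (j - r + 1))) * PowerSeries.C (R := A) (e j) := by
      intro r _
      rw [mul_sub, Finset.mul_sum]
      congr 1
      refine Finset.sum_congr rfl fun j _ => ?_
      rw [← mul_assoc, mul_assoc Q]
    rw [Finset.sum_congr rfl expand, Finset.sum_sub_distrib]
    have swap : (∑ r ∈ I, ∑ j ∈ Finset.Icc r N,
          (Q * (W A r * PowerSeries.X ^ (j - r + 1))) * PowerSeries.C (R := A) (e j))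
        = ∑ j ∈ I, ∑ r ∈ Finset.Icc (m+1) j,
            (Q * (W A r * PowerSeries.X ^ (j - r + 1))) * PowerSeries.C (R := A) (e j) := by
      rw [hI]
      refine Finset.sum_comm' ?_
      intro r j
      simp only [Finset.mem_Icc]
      omega
    rw [swap, ← Finset.sum_sub_distrib]
    refine Finset.sum_congr rfl fun j hj => ?_
    have hj' : m + 1 ≤ j := by
      rw [hI, Finset.mem_Icc] at hj
      exact hj.1
    have factor : (∑ r ∈ Finset.Icc (m+1) j,
          (Q * (W A r * PowerSeries.X ^ (j - r + 1))) * PowerSeries.C (R := A) (e j))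
        = (Q * ∑ r ∈ Finset.Icc (m+1) j, W A r * PowerSeries.X ^ (j - r + 1))
            * PowerSeries.C (R := A) (e j) := by
      rw [Finset.mul_sum, Finset.sum_mul]
    rw [factor, ← sub_mul, ← mul_sub, hQ, KEYA m j hj']
  -- Assemble everything.
  calc PowerSeries.coeff (R := A) N (D * PowerSeries.mk e)
      = PowerSeries.coeff (R := A) N (D * ∑ j ∈ I, PowerSeries.X ^ j * PowerSeries.C (R := A) (e j)) :=
        (Rel.mul_left D h1) N le_rfl
    _ = PowerSeries.coeff (R := A) N (∑ r ∈ I, (Q * (W A r * D)) *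
          (PowerSeries.C (R := A) (e r)
            - ∑ j ∈ Finset.Icc r N, PowerSeries.X ^ (j - r + 1) * PowerSeries.C (R := A) (e j))) := by
        rw [← c4]
    _ = PowerSeries.coeff (R := A) N (∑ r ∈ I, (Q * (W A r * D)) *
          (PowerSeries.C (R := A) (e r) - PowerSeries.X * PowerSeries.mk fun k => e (r + k))) :=
        (c3 N le_rfl).symm
    _ = PowerSeries.coeff (R := A) N (Q * (∑ r ∈ I, W A r * PowerSeries.C (R := A) (e r)) * D) := by
        rw [← c2]
    _ = PowerSeries.coeff (R := A) N (Q * shiftSeries 1 (PowerSeries.mk e) * D) :=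
        (Rel.mul_right D (Rel.mul_left Q h2) N le_rfl).symm

end B1Aux

open ShiftedYangian in
/-- In the shifted Yangian `Y_π(gl_2)`, `π = (p_1 ≤ p_2)`:
`b_1(u) = d_1(u) e_1(u) = (1 - u⁻¹)^{p_2 - p_1} e_1(u-1) d_1(u)`
as formal series in `u⁻¹`. -/
theorem b1_two_expressions_gl2
    {A : Type} [Ring A] {p : ℕ → ℕ} (hp : p 1 ≤ p 2)
    (Y : ShiftedYangian A 2 p) :
    Y.dS 1 * Y.eS 1 =
      ((1 : PowerSeries A) - PowerSeries.X) ^ (p 2 - p 1) *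
        shiftSeries 1 (Y.eS 1) * Y.dS 1 := by
  classical
  have hp21 : p (1+1) = p 2 := rfl
  have he0 : ∀ s, s ≤ p 2 - p 1 → Y.e 1 s = 0 := fun s hs => Y.e_zero 1 s (by omega)
  have star : ∀ s, p 2 - p 1 + 1 ≤ s →
      PowerSeries.C (R := A) (Y.e 1 s) * PowerSeries.mk (Y.d 1)
        = PowerSeries.mk (Y.d 1) *
            (PowerSeries.C (R := A) (Y.e 1 s)
              - PowerSeries.X * PowerSeries.mk fun k => Y.e 1 (s + k)) := by
    intro s hs
    have hs1 : 1 ≤ s := by omega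
    have hG : ∀ u, PowerSeries.coeff (R := A) u
        (PowerSeries.C (R := A) (Y.e 1 s) - PowerSeries.X * PowerSeries.mk fun k => Y.e 1 (s + k))
        = if u = 0 then Y.e 1 s else -Y.e 1 (s + u - 1) := by
      intro u
      rw [map_sub]
      cases u with
      | zero => simp
      | succ k =>
        rw [PowerSeries.coeff_succ_X_mul, PowerSeries.coeff_mk, PowerSeries.coeff_C]
        simp only [Nat.succ_ne_zero, if_false]
        rw [zero_sub]
        congr 2
    ext c
    rw [PowerSeries.coeff_C_mul, PowerSeries.coeff_mul,
      Finset.Nat.sum_antidiagonal_eq_sum_range_succ_mk, Finset.sum_range_succ]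
    simp only [PowerSeries.coeff_mk, hG]
    rw [Nat.sub_self, if_pos rfl]
    have hsum : (∑ k ∈ Finset.range c,
        Y.d 1 k * (if c - k = 0 then Y.e 1 s else -Y.e 1 (s + (c - k) - 1)))
        = -∑ k ∈ Finset.range c, Y.d 1 k * Y.e 1 (c + s - 1 - k) := by
      rw [← Finset.sum_neg_distrib]
      refine Finset.sum_congr rfl fun k hk => ?_
      rw [Finset.mem_range] at hk
      rw [if_neg (by omega), show s + (c - k) - 1 = c + s - 1 - k by omega, mul_neg]
    rw [hsum]
    rcases Nat.eq_zero_or_pos c with hc | hc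
    · subst hc
      simp [Y.d_zero 1]
    · have hrel := Y.rel_de 1 1 c s le_rfl (by norm_num) le_rfl (by norm_num) hc (by omega)
      norm_num at hrel
      rw [Ring.lie_def] at hrel
      rw [← hrel]
      abel
  ext N
  have := B1Aux.main_aux (p 2 - p 1) N (Y.d 1) (Y.e 1) he0 star
  simpa [ShiftedYangian.dS, ShiftedYangian.eS] using this
end
end
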